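/- Let n, m be integers with 2 ≤ n < |m|. The subgroup ⟨a⟩ of BS(n,m) generated by a is commensurated: for every g ∈ BS(n,m), the subgroups ⟨a⟩ and g⟨a⟩g⁻¹ are commensurable, i.e. their intersection has finite index in both. -/

import Mathlib

/-- The single relator `b a^n b⁻¹ a^{-m}` of the Baumslag–Solitar group `BS(n,m)`. -/
def BSRels (n m : ℤ) : Set (FreeGroup Bool) :=
  {FreeGroup.of true * FreeGroup.of false ^ n * (FreeGroup.of true)⁻¹ *
    FreeGroup.of false ^ (-m)}

/-- The Baumslag–Solitar group `BS(n,m) = ⟨a, b ∣ b a^n b⁻¹ = a^m⟩`. -/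
abbrev BS (n m : ℤ) := PresentedGroup (BSRels n m)

/-- The canonical generator `a` of `BS(n,m)`. -/
def BS.a (n m : ℤ) : BS n m := PresentedGroup.of false

/-- The canonical generator `b` of `BS(n,m)`. -/
def BS.b (n m : ℤ) : BS n m := PresentedGroup.of true

open Subgroup Pointwise

/-- `⟨x^k⟩` has finite relative index in `⟨x⟩` for `k ≠ 0`. -/
lemma relindex_zpow_ne_zero' {G : Type*} [Group G] (x : G) {k : ℤ} (hk : k ≠ 0) :
    (zpowers (x ^ k)).relIndex (zpowers x) ≠ 0 := by
  rw [Subgroup.relIndex, Subgroup.index, Nat.card_ne_zero]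
  refine ⟨inferInstance, ?_⟩
  set H := zpowers x
  set L := (zpowers (x ^ k)).subgroupOf H
  have hsurj : Function.Surjective (fun i : Fin k.natAbs ↦
      (QuotientGroup.mk (⟨x ^ (i : ℤ), mem_zpowers_iff.mpr ⟨(i : ℤ), rfl⟩⟩ : H) : H ⧸ L)) := by
    intro q
    induction q using QuotientGroup.induction_on with
    | H h =>
      obtain ⟨j, hj⟩ := mem_zpowers_iff.mp h.2
      have hpos : 0 < (k.natAbs : ℤ) := by
        exact_mod_cast Nat.pos_of_ne_zero (Int.natAbs_ne_zero.mpr hk)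
      set r := j % (k.natAbs : ℤ) with hr
      have hr0 : 0 ≤ r := Int.emod_nonneg j (by omega)
      have hrlt : r < (k.natAbs : ℤ) := Int.emod_lt_of_pos j hpos
      refine ⟨⟨r.toNat, by omega⟩, ?_⟩
      have hcast : (((⟨r.toNat, by omega⟩ : Fin k.natAbs) : ℕ) : ℤ) = r := by
        simp [Int.toNat_of_nonneg hr0]
      simp only [hcast]
      rw [QuotientGroup.eq]
      have heq : j - r = (k.natAbs : ℤ) * (j / (k.natAbs : ℤ)) := by
        rw [hr, Int.emod_def]; ring
      have hdvd : k ∣ j - r := Int.natAbs_dvd.mp (Dvd.intro _ heq.symm)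
      obtain ⟨s, hs⟩ := hdvd
      rw [mem_subgroupOf]
      have : (((⟨x ^ r, mem_zpowers_iff.mpr ⟨r, rfl⟩⟩ : H)⁻¹ * h : H) : G) = x ^ (k * s) := by
        push_cast
        rw [← hj, ← zpow_neg, ← zpow_add, ← hs]
        ring_nf
      rw [this, zpow_mul]
      exact zpow_mem (mem_zpowers _) s
  exact Finite.of_surjective _ hsurj

/-- `⟨x^k⟩` and `⟨x⟩` are commensurable for `k ≠ 0`. -/
lemma commensurable_zpowers_zpow' {G : Type*} [Group G] (x : G) {k : ℤ} (hk : k ≠ 0) :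
    Commensurable (zpowers (x ^ k)) (zpowers x) := by
  constructor
  · exact relindex_zpow_ne_zero' x hk
  · rw [Subgroup.relIndex_eq_one.mpr (zpowers_le.mpr (zpow_mem (mem_zpowers x) k))]
    exact one_ne_zero

lemma conj_smul_zpowers' {G : Type*} [Group G] (g y : G) :
    ConjAct.toConjAct g • zpowers y = zpowers (g * y * g⁻¹) := by
  rw [Subgroup.pointwise_smul_def]
  erw [MonoidHom.map_zpowers]
  congr 1

lemma smul_eq_map_conj' {G : Type*} [Group G] (g : G) (H : Subgroup G) :
    ConjAct.toConjAct g • H = Subgroup.map (MulAut.conj g).toMonoidHom H := by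
  rw [Subgroup.pointwise_smul_def]
  rfl

/-- The defining relation of `BS(n,m)`. -/
lemma BS_rel (n m : ℤ) : BS.b n m * BS.a n m ^ n * (BS.b n m)⁻¹ = BS.a n m ^ m := by
  have h1 : PresentedGroup.mk (BSRels n m) (FreeGroup.of true * FreeGroup.of false ^ n *
      (FreeGroup.of true)⁻¹ * FreeGroup.of false ^ (-m)) = 1 :=
    (QuotientGroup.eq_one_iff _).mpr (Subgroup.subset_normalClosure rfl)
  simp only [map_mul, map_zpow, map_inv] at h1
  have h2 := mul_eq_one_iff_eq_inv.mp h1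
  show PresentedGroup.mk (BSRels n m) (FreeGroup.of true) *
      PresentedGroup.mk (BSRels n m) (FreeGroup.of false) ^ n *
      (PresentedGroup.mk (BSRels n m) (FreeGroup.of true))⁻¹ =
      PresentedGroup.mk (BSRels n m) (FreeGroup.of false) ^ m
  rw [h2, zpow_neg, inv_inv]

/-- For `2 ≤ n < |m|`, the cyclic subgroup `⟨a⟩` of `BS(n,m)` is commensurated: for every
`g ∈ BS(n,m)`, the subgroups `⟨a⟩` and `g ⟨a⟩ g⁻¹` are commensurable. -/
theorem BS_zpowers_a_commensurated (n m : ℤ) (h1 : 2 ≤ n) (h2 : n < |m|)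
    (g : BS n m) :
    Commensurable (Subgroup.zpowers (BS.a n m))
      (Subgroup.map (MulAut.conj g).toMonoidHom (Subgroup.zpowers (BS.a n m))) := by
  have hn : n ≠ 0 := by omega
  have hm : m ≠ 0 := by
    intro h
    rw [h, abs_zero] at h2
    omega
  set H := Subgroup.zpowers (BS.a n m) with hH
  suffices hsuff : g ∈ Commensurable.commensurator H by
    have hc := (Commensurable.commensurator_mem_iff H g).mp hsuff
    rw [smul_eq_map_conj'] at hc
    exact hc.symm
  refine PresentedGroup.generated_by _ _ ?_ g
  intro j
  rw [Commensurable.commensurator_mem_iff]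
  cases j with
  | false =>
    show Commensurable (ConjAct.toConjAct (BS.a n m) • H) H
    have : ConjAct.toConjAct (BS.a n m) • H = H := by
      rw [hH, conj_smul_zpowers']
      congr 1
      group
    rw [this]
  | true =>
    show Commensurable (ConjAct.toConjAct (BS.b n m) • H) H
    have e1 : ConjAct.toConjAct (BS.b n m) • zpowers (BS.a n m ^ n) =
        zpowers (BS.a n m ^ m) := by
      rw [conj_smul_zpowers', BS_rel n m]
    have c1 : Commensurable (ConjAct.toConjAct (BS.b n m) • H)
        (ConjAct.toConjAct (BS.b n m) • zpowers (BS.a n m ^ n)) :=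
      (Commensurable.commensurable_conj _).mp (commensurable_zpowers_zpow' _ hn).symm
    rw [e1] at c1
    exact c1.trans (commensurable_zpowers_zpow' _ hm)
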